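/- Let S be a symmetric positive definite d×d real matrix, m ∈ ℝ^d, and let μ = e^{-f}·Leb be a probability measure on ℝ^d with f ∈ C¹(ℝ^d) and ∫‖∇f‖² dμ < ∞. For t ∈ [0,1] set A_t := (1−t)·Id + t·S and T_t(x) := (1−t)x + t(Sx + m), and let ρ_t := (T_t)_#μ. Then: (i) ρ_t has Lebesgue density r_t(y) = det(A_t)⁻¹ exp(−f(A_t⁻¹(y − tm))), and its Fisher information satisfies ∫‖∇ log r_t‖² dρ_t = ∫‖A_t⁻¹ ∇f(x)‖² dμ(x); (ii) the integrated Fisher information along the interpolation equals the S-weighted Fisher information of μ: ∫₀¹ ∫ ‖A_t⁻¹ ∇f(x)‖² dμ(x) dt = ∫ ∇f(x)·S⁻¹∇f(x) dμ(x). -/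

import Mathlib

open MeasureTheory
open scoped RealInnerProductSpace

set_option maxHeartbeats 2000000

/-- `ℝ^d` with the Euclidean inner product and Lebesgue measure. -/
abbrev Euc (d : ℕ) := EuclideanSpace ℝ (Fin d)

/-- Pushforward of a `withDensity` measure under a bimeasurable bijection. -/
lemma aux_map_withDensity {α β : Type*} [MeasurableSpace α] [MeasurableSpace β]
    (ν : Measure α) (T : α → β) (Tinv : β → α) (hT : Measurable T) (hTinv : Measurable Tinv)
    (hleft : ∀ x, Tinv (T x) = x) (g : α → ENNReal) (hg : Measurable g) :
    Measure.map T (ν.withDensity g) = (Measure.map T ν).withDensity (fun y => g (Tinv y)) := by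
  ext s hs
  rw [Measure.map_apply hT hs, withDensity_apply _ (hT hs), withDensity_apply _ hs,
    setLIntegral_map hs (show Measurable fun y => g (Tinv y) from hg.comp hTinv) hT]
  simp [hleft]

/-- `withDensity` of a scaled measure. -/
lemma aux_smul_withDensity {α : Type*} [MeasurableSpace α]
    (ν : Measure α) (r : ENNReal) (h : α → ENNReal) (hr : r ≠ ⊤) :
    (r • ν).withDensity h = ν.withDensity (fun y => r * h y) := by
  ext s hs
  rw [withDensity_apply _ hs, withDensity_apply _ hs, Measure.restrict_smul,
    lintegral_smul_measure, lintegral_const_mul' _ _ hr, smul_eq_mul]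


theorem stmt14 (d : ℕ)
    (S : Euc d →L[ℝ] Euc d)
    (hSsymm : ∀ u v, ⟪S u, v⟫ = ⟪u, S v⟫)
    (hSpos : ∀ v, v ≠ 0 → 0 < ⟪S v, v⟫)
    (Sinv : Euc d →L[ℝ] Euc d)
    (hSinv₁ : ∀ v, Sinv (S v) = v) (hSinv₂ : ∀ v, S (Sinv v) = v)
    (m : Euc d)
    (f : Euc d → ℝ) (hf : ContDiff ℝ 1 f)
    (μ : Measure (Euc d))
    (hμ : μ = volume.withDensity fun x => ENNReal.ofReal (Real.exp (-f x)))
    [IsProbabilityMeasure μ]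
    (hFish : Integrable (fun x => ‖gradient f x‖ ^ 2) μ)
    (Ainv : ℝ → (Euc d →L[ℝ] Euc d))
    (hAinv : ∀ t ∈ Set.Icc (0:ℝ) 1,
      (∀ v, Ainv t ((1 - t) • v + t • S v) = v) ∧
      (∀ v, (1 - t) • (Ainv t v) + t • S (Ainv t v) = v)) :
    (∀ t ∈ Set.Icc (0:ℝ) 1,
      Measure.map (fun x => (1 - t) • x + t • (S x + m)) μ
        = volume.withDensity (fun y => ENNReal.ofReal
            ((LinearMap.det
                (((1 - t) • ContinuousLinearMap.id ℝ (Euc d) + t • S :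
                  Euc d →L[ℝ] Euc d) : Euc d →ₗ[ℝ] Euc d))⁻¹
              * Real.exp (-f (Ainv t (y - t • m))))) ∧
      (∫ y, ‖gradient (fun y' => Real.log
            ((LinearMap.det
                (((1 - t) • ContinuousLinearMap.id ℝ (Euc d) + t • S :
                  Euc d →L[ℝ] Euc d) : Euc d →ₗ[ℝ] Euc d))⁻¹
              * Real.exp (-f (Ainv t (y' - t • m))))) y‖ ^ 2
          ∂(Measure.map (fun x => (1 - t) • x + t • (S x + m)) μ))
        = ∫ x, ‖Ainv t (gradient f x)‖ ^ 2 ∂μ) ∧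
    (∫ t in (0:ℝ)..1, ∫ x, ‖Ainv t (gradient f x)‖ ^ 2 ∂μ)
      = ∫ x, ⟪gradient f x, Sinv (gradient f x)⟫ ∂μ := by
  -- notation
  set cid : Euc d →L[ℝ] Euc d := ContinuousLinearMap.id ℝ (Euc d) with hcid
  set A : ℝ → (Euc d →L[ℝ] Euc d) := fun t => (1 - t) • cid + t • S with hA
  have hAapp : ∀ t x, A t x = (1 - t) • x + t • S x := by
    intro t x
    simp [hA, hcid]
  -- A t is a two-sided inverse of Ainv t on [0,1]
  have hmul₁ : ∀ t ∈ Set.Icc (0:ℝ) 1, A t * Ainv t = 1 := by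
    intro t ht
    refine ContinuousLinearMap.ext fun v => ?_
    simpa [ContinuousLinearMap.mul_apply, hAapp] using (hAinv t ht).2 v
  have hmul₂ : ∀ t ∈ Set.Icc (0:ℝ) 1, Ainv t * A t = 1 := by
    intro t ht
    refine ContinuousLinearMap.ext fun v => ?_
    simpa [ContinuousLinearMap.mul_apply, hAapp] using (hAinv t ht).1 v
  -- units
  have hunit : ∀ t ∈ Set.Icc (0:ℝ) 1, ∃ u : (Euc d →L[ℝ] Euc d)ˣ,
      (u : Euc d →L[ℝ] Euc d) = A t ∧ ((u⁻¹ : _ˣ) : Euc d →L[ℝ] Euc d) = Ainv t := by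
    intro t ht
    exact ⟨⟨A t, Ainv t, hmul₁ t ht, hmul₂ t ht⟩, rfl, rfl⟩
  have hRinv : ∀ t ∈ Set.Icc (0:ℝ) 1, Ring.inverse (A t) = Ainv t := by
    intro t ht
    obtain ⟨u, hu, hu'⟩ := hunit t ht
    rw [← hu, Ring.inverse_unit, hu']
  -- symmetry
  have hAsymm : ∀ t (u v : Euc d), ⟪A t u, v⟫ = ⟪u, A t v⟫ := by
    intro t u v
    simp only [hAapp]
    rw [inner_add_left, inner_add_right, real_inner_smul_left, real_inner_smul_right,
      real_inner_smul_left, real_inner_smul_right, hSsymm]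
  have hAinvsymm : ∀ t ∈ Set.Icc (0:ℝ) 1, ∀ u v : Euc d, ⟪Ainv t u, v⟫ = ⟪u, Ainv t v⟫ := by
    intro t ht u v
    calc ⟪Ainv t u, v⟫ = ⟪Ainv t u, A t (Ainv t v)⟫ := by
          rw [show A t (Ainv t v) = v from congrArg (fun g => g v) (hmul₁ t ht)]
      _ = ⟪A t (Ainv t u), Ainv t v⟫ := (hAsymm t _ _).symm
      _ = ⟪u, Ainv t v⟫ := by
          rw [show A t (Ainv t u) = u from congrArg (fun g => g u) (hmul₁ t ht)]
  -- determinant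
  set D : ℝ → ℝ := fun t => LinearMap.det ((A t : Euc d →L[ℝ] Euc d) : Euc d →ₗ[ℝ] Euc d)
    with hD
  have hDcont : Continuous D := by
    classical
    set b := (EuclideanSpace.basisFun (Fin d) ℝ).toBasis with hb
    set M1 := LinearMap.toMatrix b b ((cid : Euc d →L[ℝ] Euc d) : Euc d →ₗ[ℝ] Euc d) with hM1
    set M2 := LinearMap.toMatrix b b ((S : Euc d →L[ℝ] Euc d) : Euc d →ₗ[ℝ] Euc d) with hM2
    have hc : Continuous fun t : ℝ => ((1 - t) • M1 + t • M2 : Matrix (Fin d) (Fin d) ℝ) := by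
      exact ((continuous_const.sub continuous_id).smul continuous_const).add
        (continuous_id.smul continuous_const)
    refine Continuous.congr hc.matrix_det fun t => ?_
    show ((1 - t) • M1 + t • M2).det
      = LinearMap.det ((A t : Euc d →L[ℝ] Euc d) : Euc d →ₗ[ℝ] Euc d)
    rw [← LinearMap.det_toMatrix b ((A t : Euc d →L[ℝ] Euc d) : Euc d →ₗ[ℝ] Euc d)]
    congr 1
  have hD0 : D 0 = 1 := by
    have : A 0 = cid := by
      refine ContinuousLinearMap.ext fun v => ?_
      simp [hAapp, hcid]
    simp [hD, this, hcid]
  have hDne : ∀ t ∈ Set.Icc (0:ℝ) 1, D t ≠ 0 := by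
    intro t ht
    have hc : ((Ainv t : Euc d →L[ℝ] Euc d) : Euc d →ₗ[ℝ] Euc d).comp
        ((A t : Euc d →L[ℝ] Euc d) : Euc d →ₗ[ℝ] Euc d) = LinearMap.id := by
      refine LinearMap.ext fun v => ?_
      simpa [hAapp] using (hAinv t ht).1 v
    have := congrArg LinearMap.det hc
    rw [LinearMap.det_comp, LinearMap.det_id] at this
    exact right_ne_zero_of_mul_eq_one this
  have hDpos : ∀ t ∈ Set.Icc (0:ℝ) 1, 0 < D t := by
    intro t ht
    by_contra hneg
    push_neg at hneg
    have hlt : D t < 0 := lt_of_le_of_ne hneg (hDne t ht)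
    have h0t : (0:ℝ) ≤ t := ht.1
    have : (0:ℝ) ∈ Set.Icc (D t) (D 0) := by
      constructor <;> [exact hlt.le; simp [hD0]]
    obtain ⟨s, hs, hs0⟩ := intermediate_value_Icc' h0t (hDcont.continuousOn) this
    exact hDne s ⟨hs.1, hs.2.trans ht.2⟩ hs0
  -- derivative of A
  have hAderiv : ∀ t₀ : ℝ, HasDerivAt A (S - cid) t₀ := by
    intro t₀
    rw [hA]
    have h1 : HasDerivAt (fun t : ℝ => 1 - t) (-1) t₀ := by
      simpa using (hasDerivAt_id t₀).const_sub 1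
    have h4 := (h1.smul_const cid).add ((hasDerivAt_id t₀).smul_const S)
    exact h4.congr_deriv (by simp only [neg_one_smul, one_smul]; abel)
  -- continuity of the inverse path
  have hcontInv : ContinuousOn (fun t => Ring.inverse (A t)) (Set.Icc (0:ℝ) 1) := by
    intro t ht
    obtain ⟨u, hu, -⟩ := hunit t ht
    have h1 : ContinuousAt A t := by
      rw [hA]
      exact ((continuous_const.sub continuous_id).smul continuous_const).add
        (continuous_id.smul continuous_const) |>.continuousAt
    have h2 : ContinuousAt Ring.inverse (A t) := by
      rw [← hu]; exact NormedRing.inverse_continuousAt u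
    exact (h2.comp h1).continuousWithinAt
  -- FTC computation
  have hFTC : ∀ v : Euc d,
      (∫ t in (0:ℝ)..1, ‖Ring.inverse (A t) v‖ ^ 2) = ⟪v, Sinv v⟫ := by
    intro v
    have hφderiv : ∀ t ∈ Set.uIcc (0:ℝ) 1,
        HasDerivAt (fun s => s * ⟪Ring.inverse (A s) v, v⟫)
          (‖Ring.inverse (A t) v‖ ^ 2) t := by
      rw [Set.uIcc_of_le zero_le_one]
      intro t ht
      obtain ⟨u, hu, hu'⟩ := hunit t ht
      have h8 := (hu ▸ hasFDerivAt_ringInverse (𝕜 := ℝ) u).comp_hasDerivAt t (hAderiv t)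
      have h9 := (ContinuousLinearMap.apply ℝ (Euc d) v).hasFDerivAt.comp_hasDerivAt t h8
      have h10 := HasDerivAt.inner ℝ h9 (hasDerivAt_const t v)
      have h11 := (hasDerivAt_id t).mul h10
      have key : ⟪Ainv t v, v⟫ - t * ⟪Ainv t (S (Ainv t v) - Ainv t v), v⟫
          = ‖Ainv t v‖ ^ 2 := by
        set u0 := Ainv t v with hu0
        have hv : A t u0 = v := congrArg (fun g => g v) (hmul₁ t ht)
        have a := hAinvsymm t ht (S u0 - u0) v
        rw [← hu0] at a
        have b : ⟪u0, v⟫ = (1 - t) * ⟪u0, u0⟫ + t * ⟪u0, S u0⟫ := by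
          conv_lhs => rw [← hv, hAapp]
          rw [inner_add_right, real_inner_smul_right, real_inner_smul_right]
        rw [a, b, inner_sub_left, hSsymm, ← real_inner_self_eq_norm_sq]
        ring
      simp only [Function.comp_def, ContinuousLinearMap.apply_apply,
        ContinuousLinearMap.neg_apply, ContinuousLinearMap.mulLeftRight_apply,
        ContinuousLinearMap.mul_apply, ContinuousLinearMap.sub_apply, hu',
        inner_zero_right, add_zero, one_mul, id_eq, hcid,
        ContinuousLinearMap.coe_id', inner_neg_left, zero_add] at h11
      rw [hRinv t ht] at h11 ⊢
      refine h11.congr_deriv ?_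
      linear_combination key
    have hint : IntervalIntegrable (fun t => ‖Ring.inverse (A t) v‖ ^ 2) volume 0 1 := by
      apply ContinuousOn.intervalIntegrable
      rw [Set.uIcc_of_le zero_le_one]
      exact ((hcontInv.clm_apply continuousOn_const).norm.pow 2)
    rw [intervalIntegral.integral_eq_sub_of_hasDerivAt hφderiv hint]
    have h1mem : (1:ℝ) ∈ Set.Icc (0:ℝ) 1 := ⟨zero_le_one, le_refl 1⟩
    have hS1 : Ring.inverse (A 1) v = Sinv v := by
      rw [hRinv 1 h1mem]
      have h1 : Ainv 1 (S (Sinv v)) = Sinv v := by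
        simpa using (hAinv 1 h1mem).1 (Sinv v)
      rw [← hSinv₂ v, h1, hSinv₂ v]
    simp only [one_mul, zero_mul, sub_zero, hS1]
    exact real_inner_comm _ _
  -- gradient of f is continuous
  have hgradcont : Continuous (gradient f) := by
    have h1 : Continuous (fderiv ℝ f) := hf.continuous_fderiv one_ne_zero
    exact (LinearIsometryEquiv.continuous _).comp h1
  have hfdiff : Differentiable ℝ f := hf.differentiable one_ne_zero
  -- the affine map
  have hTdef : ∀ t : ℝ, (fun x : Euc d => (1 - t) • x + t • (S x + m))
      = fun x => A t x + t • m := by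
    intro t; funext x
    rw [hAapp, smul_add, ← add_assoc]
  refine ⟨fun t ht => ?_, ?_⟩
  · -- part (i)
    have hDt : LinearMap.det (((1 - t) • cid + t • S :
        Euc d →L[ℝ] Euc d) : Euc d →ₗ[ℝ] Euc d) = D t := rfl
    have hct : (0:ℝ) < (D t)⁻¹ := inv_pos.2 (hDpos t ht)
    have hTinvleft : ∀ x : Euc d, Ainv t ((A t x + t • m) - t • m) = x := by
      intro x
      rw [add_sub_cancel_right]
      simpa [hAapp] using (hAinv t ht).1 x
    have hTmeas : Measurable (fun x : Euc d => A t x + t • m) :=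
      ((A t).continuous.add continuous_const).measurable
    have hTinvmeas : Measurable (fun y : Euc d => Ainv t (y - t • m)) :=
      ((Ainv t).continuous.comp (continuous_id.sub continuous_const)).measurable
    have hgmeas : Measurable (fun x : Euc d => ENNReal.ofReal (Real.exp (-f x))) := by
      exact (ENNReal.measurable_ofReal.comp ((hf.continuous.neg).rexp.measurable))
    -- the pushforward of volume
    have hmapvol : Measure.map (fun x : Euc d => A t x + t • m) volume
        = (ENNReal.ofReal ((D t)⁻¹)) • volume := by
      have h1 : (fun x : Euc d => A t x + t • m) = (fun y : Euc d => y + t • m) ∘ (A t) := rfl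
      rw [h1, ← Measure.map_map (measurable_add_const _) (A t).continuous.measurable]
      have h2 : Measure.map (⇑(A t)) (volume : Measure (Euc d))
          = ENNReal.ofReal |(D t)⁻¹| • volume := by
        have h3 := Measure.map_linearMap_addHaar_eq_smul_addHaar
          (volume : Measure (Euc d))
          (f := ((A t : Euc d →L[ℝ] Euc d) : Euc d →ₗ[ℝ] Euc d)) (hDne t ht)
        simpa using h3
      rw [h2, Measure.map_smul, map_add_right_eq_self, abs_of_pos hct]
    -- gradient formula
    have hgrad : ∀ y : Euc d,
        gradient (fun y' => Real.log ((D t)⁻¹ * Real.exp (-f (Ainv t (y' - t • m))))) y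
          = -(Ainv t (gradient f (Ainv t (y - t • m)))) := by
      intro y
      have hfun : (fun y' => Real.log ((D t)⁻¹ * Real.exp (-f (Ainv t (y' - t • m)))))
          = fun y' => Real.log ((D t)⁻¹) + -(f (Ainv t (y' - t • m))) := by
        funext y'
        rw [Real.log_mul (ne_of_gt hct) (Real.exp_ne_zero _), Real.log_exp]
      rw [hfun]
      have hfd : HasFDerivAt f
          (InnerProductSpace.toDual ℝ (Euc d) (gradient f (Ainv t (y - t • m))))
          (Ainv t (y - t • m)) := (hfdiff _).hasGradientAt.hasFDerivAt
      have hL : HasFDerivAt (fun y' : Euc d => Ainv t (y' - t • m)) (Ainv t) y := by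
        have h1 : HasFDerivAt (fun y' : Euc d => y' - t • m)
            (ContinuousLinearMap.id ℝ (Euc d)) y := (hasFDerivAt_id y).sub_const _
        have := (Ainv t).hasFDerivAt.comp y h1
        rwa [ContinuousLinearMap.comp_id] at this
      have hcomp := (hfd.comp y hL).neg.const_add (Real.log ((D t)⁻¹))
      have h4 : -((InnerProductSpace.toDual ℝ (Euc d)
            (gradient f (Ainv t (y - t • m)))).comp (Ainv t))
          = InnerProductSpace.toDual ℝ (Euc d)
            (-(Ainv t (gradient f (Ainv t (y - t • m))))) := by
        refine ContinuousLinearMap.ext fun w => ?_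
        simp only [ContinuousLinearMap.neg_apply, ContinuousLinearMap.coe_comp',
          Function.comp_apply, InnerProductSpace.toDual_apply_apply, inner_neg_left, neg_inj]
        exact (hAinvsymm t ht _ w).symm
      rw [h4] at hcomp
      have h6 : HasGradientAt
          (fun y' => Real.log ((D t)⁻¹) + -(f (Ainv t (y' - t • m))))
          (-(Ainv t (gradient f (Ainv t (y - t • m))))) y := by
        rw [hasGradientAt_iff_hasFDerivAt]
        exact hcomp
      exact h6.gradient
    constructor
    · -- density identity
      rw [hDt, hTdef t, hμ]
      rw [aux_map_withDensity volume _ (fun y => Ainv t (y - t • m)) hTmeas hTinvmeas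
        hTinvleft _ hgmeas]
      rw [hmapvol, aux_smul_withDensity _ _ _ ENNReal.ofReal_ne_top]
      congr 1
      funext y
      rw [← ENNReal.ofReal_mul hct.le]
    · -- Fisher identity
      rw [hDt, hTdef t]
      have hfun2 : (fun y => ‖gradient (fun y' => Real.log ((D t)⁻¹
            * Real.exp (-f (Ainv t (y' - t • m))))) y‖ ^ 2)
          = fun y => ‖Ainv t (gradient f (Ainv t (y - t • m)))‖ ^ 2 := by
        funext y
        rw [hgrad y, norm_neg]
      rw [hfun2]
      have hcont2 : Continuous fun y : Euc d =>
          ‖Ainv t (gradient f (Ainv t (y - t • m)))‖ ^ 2 := by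
        exact (((Ainv t).continuous.comp (hgradcont.comp
          ((Ainv t).continuous.comp (continuous_id.sub continuous_const)))).norm.pow 2)
      rw [integral_map (show Continuous (fun x : Euc d => A t x + t • m) from
          (A t).continuous.add continuous_const).aemeasurable
        hcont2.aestronglyMeasurable]
      simp only [hTinvleft]
  · -- part (ii)
    have h01 : (0:ℝ) ≤ 1 := zero_le_one
    rw [intervalIntegral.integral_of_le h01]
    have hEq : Set.EqOn (fun t => ∫ x, ‖Ainv t (gradient f x)‖ ^ 2 ∂μ)
        (fun t => ∫ x, ‖Ring.inverse (A t) (gradient f x)‖ ^ 2 ∂μ) (Set.Ioc (0:ℝ) 1) := by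
      intro t ht
      have ht' : t ∈ Set.Icc (0:ℝ) 1 := ⟨le_of_lt ht.1, ht.2⟩
      simp only [hRinv t ht']
    rw [setIntegral_congr_fun measurableSet_Ioc hEq]
    haveI hfin : IsFiniteMeasure (volume.restrict (Set.Ioc (0:ℝ) 1)) := by
      constructor
      rw [Measure.restrict_apply_univ]
      simp [Real.volume_Ioc]
    have hprod : (volume.restrict (Set.Ioc (0:ℝ) 1)).prod μ
        = (volume.prod μ).restrict ((Set.Ioc (0:ℝ) 1) ×ˢ (Set.univ : Set (Euc d))) := by
      rw [← Measure.prod_restrict, Measure.restrict_univ]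
    have hFcontOn : ContinuousOn
        (Function.uncurry fun t x => ‖Ring.inverse (A t) (gradient f x)‖ ^ 2)
        ((Set.Icc (0:ℝ) 1) ×ˢ (Set.univ : Set (Euc d))) := by
      have h1 : ContinuousOn (fun p : ℝ × Euc d => Ring.inverse (A p.1))
          ((Set.Icc (0:ℝ) 1) ×ˢ (Set.univ : Set (Euc d))) :=
        hcontInv.comp continuous_fst.continuousOn (fun p hp => hp.1)
      have h2 : ContinuousOn (fun p : ℝ × Euc d => gradient f p.2)
          ((Set.Icc (0:ℝ) 1) ×ˢ (Set.univ : Set (Euc d))) :=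
        (hgradcont.comp continuous_snd).continuousOn
      exact ((h1.clm_apply h2).norm.pow 2)
    have hmeasF : AEStronglyMeasurable
        (Function.uncurry fun t x => ‖Ring.inverse (A t) (gradient f x)‖ ^ 2)
        ((volume.restrict (Set.Ioc (0:ℝ) 1)).prod μ) := by
      rw [hprod]
      refine ContinuousOn.aestronglyMeasurable ?_ (measurableSet_Ioc.prod MeasurableSet.univ)
      exact hFcontOn.mono (Set.prod_mono Set.Ioc_subset_Icc_self subset_rfl)
    obtain ⟨C, hC⟩ := (isCompact_Icc (a := (0:ℝ)) (b := 1)).exists_bound_of_continuousOn hcontInv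
    have hInt : Integrable
        (Function.uncurry fun t x => ‖Ring.inverse (A t) (gradient f x)‖ ^ 2)
        ((volume.restrict (Set.Ioc (0:ℝ) 1)).prod μ) := by
      have hdom : Integrable (fun p : ℝ × Euc d => (1:ℝ) * (C ^ 2 * ‖gradient f p.2‖ ^ 2))
          ((volume.restrict (Set.Ioc (0:ℝ) 1)).prod μ) :=
        Integrable.mul_prod (integrable_const (1:ℝ)) (hFish.const_mul _)
      refine hdom.mono' hmeasF ?_
      have hae : ∀ᵐ p ∂((volume.restrict (Set.Ioc (0:ℝ) 1)).prod μ),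
          p ∈ (Set.Ioc (0:ℝ) 1) ×ˢ (Set.univ : Set (Euc d)) := by
        rw [hprod]
        exact ae_restrict_mem (measurableSet_Ioc.prod MeasurableSet.univ)
      filter_upwards [hae] with p hp
      have hp1 : p.1 ∈ Set.Icc (0:ℝ) 1 := ⟨le_of_lt hp.1.1, hp.1.2⟩
      have hb := (Ring.inverse (A p.1)).le_opNorm (gradient f p.2)
      have hre : Function.uncurry (fun t x => ‖Ring.inverse (A t) (gradient f x)‖ ^ 2) p
          = ‖Ring.inverse (A p.1) (gradient f p.2)‖ ^ 2 := rfl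
      calc ‖Function.uncurry (fun t x => ‖Ring.inverse (A t) (gradient f x)‖ ^ 2) p‖
          = ‖Ring.inverse (A p.1) (gradient f p.2)‖ ^ 2 := by
            rw [hre, Real.norm_eq_abs, abs_of_nonneg (sq_nonneg _)]
        _ ≤ (C * ‖gradient f p.2‖) ^ 2 := by
            apply pow_le_pow_left₀ (norm_nonneg _)
            exact le_trans hb (mul_le_mul_of_nonneg_right (hC p.1 hp1) (norm_nonneg _))
        _ = 1 * (C ^ 2 * ‖gradient f p.2‖ ^ 2) := by ring
    rw [MeasureTheory.integral_integral_swap hInt]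
    refine integral_congr_ae (Filter.Eventually.of_forall fun x => ?_)
    have := hFTC (gradient f x)
    rw [intervalIntegral.integral_of_le h01] at this
    exact this
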